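/- Let k = 2 and m ≥ 2. Then T_2m^{(0)} = W_2m; that is, every scalar matrix tr(z_{i_1}⋯z_{i_l})·I with l ≥ 1 belongs to the K-subalgebra W_2m generated by z_1,…,z_m. Moreover, C_2m^{(0)} is generated as a unital K-algebra by the scalar matrices tr(z_i z_j)·I for 1 ≤ i ≤ j ≤ m and tr(z_{i_1} z_{i_2} z_{i_3})·I for 1 ≤ i_1 < i_2 < i_3 ≤ m, all of which belong to W_2m. -/

import Mathlib

open scoped BigOperators
noncomputable section

/-- `Ω = K[y_pq^(i)]`, matrices over the polynomial ring in `k²m` variables. -/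
abbrev Mat (K : Type) [Field K] (k m : ℕ) :=
  Matrix (Fin k) (Fin k) (MvPolynomial (Fin m × Fin k × Fin k) K)

/-- The generic `k × k` matrices `y_i = (y_pq^(i))`. -/
def genY (K : Type) [Field K] (k m : ℕ) (i : Fin m) : Mat K k m :=
  Matrix.of fun p q => MvPolynomial.X (i, p, q)

/-- The scalar matrix `f · I` for `f ∈ Ω`. -/
def scalarOf (K : Type) [Field K] (k m : ℕ)
    (f : MvPolynomial (Fin m × Fin k × Fin k) K) : Mat K k m :=
  algebraMap _ _ f

/-- `R_km`: the generic matrix algebra, generated by `y_1, …, y_m`. -/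
def Rkm (K : Type) [Field K] (k m : ℕ) : Subalgebra K (Mat K k m) :=
  Algebra.adjoin K (Set.range (genY K k m))

/-- `C_km`: the pure trace algebra, generated by the `tr(y_{i_1} ⋯ y_{i_l}) · I`, `l ≥ 1`. -/
def Ckm (K : Type) [Field K] (k m : ℕ) : Subalgebra K (Mat K k m) :=
  Algebra.adjoin K
    {x | ∃ (l : ℕ) (w : Fin (l + 1) → Fin m),
      x = scalarOf K k m (Matrix.trace ((List.ofFn fun j => genY K k m (w j)).prod))}

/-- `T_km`: the mixed trace algebra, generated by `R_km ∪ C_km`. -/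
def Tkm (K : Type) [Field K] (k m : ℕ) : Subalgebra K (Mat K k m) :=
  Rkm K k m ⊔ Ckm K k m

/-- The generic traceless matrices `z_i = y_i - (1/k)·tr(y_i)·I`. -/
def genZ (K : Type) [Field K] (k m : ℕ) (i : Fin m) : Mat K k m :=
  genY K k m i - (k : K)⁻¹ • scalarOf K k m (Matrix.trace (genY K k m i))

/-- `W_km`: the algebra generated by the generic traceless matrices `z_1, …, z_m`. -/
def Wkm (K : Type) [Field K] (k m : ℕ) : Subalgebra K (Mat K k m) :=
  Algebra.adjoin K (Set.range (genZ K k m))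

/-- `C_km⁰`: the algebra generated by the `tr(z_{i_1} ⋯ z_{i_l}) · I`, `l ≥ 1`. -/
def Ckm0 (K : Type) [Field K] (k m : ℕ) : Subalgebra K (Mat K k m) :=
  Algebra.adjoin K
    {x | ∃ (l : ℕ) (w : Fin (l + 1) → Fin m),
      x = scalarOf K k m (Matrix.trace ((List.ofFn fun j => genZ K k m (w j)).prod))}

/-- `T_km⁰`: the algebra generated by `W_km ∪ C_km⁰`. -/
def Tkm0 (K : Type) [Field K] (k m : ℕ) : Subalgebra K (Mat K k m) :=
  Wkm K k m ⊔ Ckm0 K k m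

/-- The subspace of matrices all of whose entries have total degree at most `n`,
i.e. `M_k(Ω_{≤n})`. -/
def degLE (K : Type) [Field K] (k m n : ℕ) : Submodule K (Mat K k m) where
  carrier := {a | ∀ p q, (a p q).totalDegree ≤ n}
  add_mem' := by
    intro a b ha hb p q
    calc ((a + b) p q).totalDegree = (a p q + b p q).totalDegree := by simp [Matrix.add_apply]
    _ ≤ max (a p q).totalDegree (b p q).totalDegree := MvPolynomial.totalDegree_add _ _
    _ ≤ n := max_le (ha p q) (hb p q)
  zero_mem' := by intro p q; simp
  smul_mem' := by
    intro c a ha p q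
    calc ((c • a) p q).totalDegree = (c • a p q).totalDegree := by simp [Matrix.smul_apply]
    _ ≤ (a p q).totalDegree := MvPolynomial.totalDegree_smul_le _ _
    _ ≤ n := ha p q


section Aux
variable {R : Type} [CommRing R]

lemma tl11 {a : Matrix (Fin 2) (Fin 2) R} (h : a.trace = 0) : a 1 1 = -(a 0 0) := by
  simp [Matrix.trace, Fin.sum_univ_two, Matrix.diag] at h
  linear_combination h

lemma key4 (a b c M : Matrix (Fin 2) (Fin 2) R) (ha : a.trace = 0) (hb : b.trace = 0)
    (hc : c.trace = 0) :
    2 * (a * b * c * M).trace =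
      M.trace * (a * b * c).trace + (a * b).trace * (c * M).trace
        - (a * c).trace * (b * M).trace + (a * M).trace * (b * c).trace := by
  have ha' := tl11 ha; have hb' := tl11 hb; have hc' := tl11 hc
  simp only [Matrix.trace, Fin.sum_univ_two, Matrix.diag, Matrix.mul_apply]
  rw [ha', hb', hc']; ring

lemma swap3 (a b c : Matrix (Fin 2) (Fin 2) R) (ha : a.trace = 0) (hb : b.trace = 0)
    (hc : c.trace = 0) : (a * c * b).trace = -(a * b * c).trace := by
  have ha' := tl11 ha; have hb' := tl11 hb; have hc' := tl11 hc
  simp only [Matrix.trace, Fin.sum_univ_two, Matrix.diag, Matrix.mul_apply]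
  rw [ha', hb', hc']; ring

lemma sq3 (a b : Matrix (Fin 2) (Fin 2) R) (ha : a.trace = 0) (hb : b.trace = 0) :
    (a * a * b).trace = 0 := by
  have ha' := tl11 ha; have hb' := tl11 hb
  simp only [Matrix.trace, Fin.sum_univ_two, Matrix.diag, Matrix.mul_apply]
  rw [ha', hb']; ring

lemma tr1 (a : Matrix (Fin 2) (Fin 2) R) (ha : a.trace = 0) : a.trace = 0 := ha

lemma pairId (a b : Matrix (Fin 2) (Fin 2) R) (ha : a.trace = 0) (hb : b.trace = 0) :
    (a * b).trace • (1 : Matrix (Fin 2) (Fin 2) R) = a * b + b * a := by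
  have ha' := tl11 ha; have hb' := tl11 hb
  ext i j
  fin_cases i <;> fin_cases j <;>
    simp only [Matrix.smul_apply, Matrix.one_apply, Matrix.add_apply, Matrix.mul_apply,
      Matrix.trace, Fin.sum_univ_two, Matrix.diag] <;>
    simp <;> rw [ha', hb'] <;> ring

lemma tripleId (a b c : Matrix (Fin 2) (Fin 2) R) (ha : a.trace = 0) (hb : b.trace = 0)
    (hc : c.trace = 0) :
    (a * b * c).trace • (1 : Matrix (Fin 2) (Fin 2) R) = a * b * c - c * b * a := by
  have ha' := tl11 ha; have hb' := tl11 hb; have hc' := tl11 hc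
  ext i j
  fin_cases i <;> fin_cases j <;>
    simp only [Matrix.smul_apply, Matrix.one_apply, Matrix.sub_apply, Matrix.mul_apply,
      Matrix.trace, Fin.sum_univ_two, Matrix.diag] <;>
    simp <;> rw [ha', hb', hc'] <;> ring

section Main
variable (K : Type) [Field K] [CharZero K] (m : ℕ)

local notation "Ω" => MvPolynomial (Fin m × Fin 2 × Fin 2) K
local notation "z" => genZ K 2 m

lemma genZ_trace (i : Fin m) : (genZ K 2 m i).trace = 0 := by
  have h1 : (scalarOf K 2 m (genY K 2 m i).trace).trace = 2 * (genY K 2 m i).trace := by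
    rw [scalarOf, Algebra.algebraMap_eq_smul_one, Matrix.trace_smul, Matrix.trace_one]
    simp [smul_eq_mul]; ring
  rw [genZ, Matrix.trace_sub, Matrix.trace_smul, h1, MvPolynomial.smul_eq_C_mul]
  have h2 : (MvPolynomial.C ((2:K)⁻¹) : Ω) * 2 = 1 := by
    have : (2 : Ω) = MvPolynomial.C (2:K) :=
      (map_ofNat (MvPolynomial.C : K →+* _) 2).symm
    rw [this, ← MvPolynomial.C_mul]; norm_num
  calc (genY K 2 m i).trace - MvPolynomial.C (2:K)⁻¹ * (2 * (genY K 2 m i).trace)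
      = (1 - MvPolynomial.C (2:K)⁻¹ * 2) * (genY K 2 m i).trace := by ring
    _ = 0 := by rw [h2]; ring

/-- generating set at the polynomial level -/
def polyGens : Set Ω :=
  {f | ∃ i j, i ≤ j ∧ f = (z i * z j).trace} ∪
  {f | ∃ i₁ i₂ i₃, i₁ < i₂ ∧ i₂ < i₃ ∧ f = (z i₁ * z i₂ * z i₃).trace}

def Spoly : Subalgebra K Ω := Algebra.adjoin K (polyGens K m)

lemma trace2mem (i j : Fin m) : (z i * z j).trace ∈ Spoly K m := by
  rcases le_total i j with h | h
  · exact Algebra.subset_adjoin (Or.inl ⟨i, j, h, rfl⟩)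
  · rw [Matrix.trace_mul_comm]
    exact Algebra.subset_adjoin (Or.inl ⟨j, i, h, rfl⟩)

lemma trace3mem (i j k : Fin m) : (z i * z j * z k).trace ∈ Spoly K m := by
  have hz : ∀ p : Fin m, (z p).trace = 0 := genZ_trace K m
  have gen : ∀ p q r : Fin m, p < q → q < r → (z p * z q * z r).trace ∈ Spoly K m :=
    fun p q r h1 h2 => Algebra.subset_adjoin (Or.inr ⟨p, q, r, h1, h2, rfl⟩)
  have swp : ∀ p q r : Fin m, (z p * z r * z q).trace = -(z p * z q * z r).trace :=
    fun p q r => swap3 _ _ _ (hz p) (hz q) (hz r)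
  have cyc : ∀ p q r : Fin m, (z p * z q * z r).trace = (z r * z p * z q).trace :=
    fun p q r => Matrix.trace_mul_cycle (z p) (z q) (z r)
  have sq : ∀ p q : Fin m, (z p * z p * z q).trace = 0 := fun p q => sq3 _ _ (hz p) (hz q)
  rcases lt_trichotomy i j with hij | rfl | hij
  · rcases lt_trichotomy j k with hjk | rfl | hjk
    · exact gen i j k hij hjk
    · rw [cyc i j j, cyc j i j, sq]; exact (Spoly K m).zero_mem
    · rcases lt_trichotomy i k with hik | rfl | hik
      · rw [swp i k j]; exact neg_mem (gen i k j hik hjk)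
      · rw [cyc i j i, sq]; exact (Spoly K m).zero_mem
      · rw [cyc i j k]; exact gen k i j hik hij
  · rw [sq]; exact (Spoly K m).zero_mem
  · rcases lt_trichotomy i k with hik | rfl | hik
    · rw [cyc i j k, cyc k i j, swp j i k]; exact neg_mem (gen j i k hij hik)
    · rw [cyc i j i, sq]; exact (Spoly K m).zero_mem
    · rcases lt_trichotomy j k with hjk | rfl | hjk
      · rw [cyc i j k, cyc k i j]; exact gen j k i hjk hik
      · rw [cyc i j j, cyc j i j, sq]; exact (Spoly K m).zero_mem
      · rw [cyc i j k, swp k j i]; exact neg_mem (gen k j i hjk hij)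

lemma half_two : (MvPolynomial.C ((2:K)⁻¹) : MvPolynomial (Fin m × Fin 2 × Fin 2) K) * 2 = 1 := by
  have : (2 : MvPolynomial (Fin m × Fin 2 × Fin 2) K) = MvPolynomial.C (2:K) :=
    (map_ofNat (MvPolynomial.C : K →+* _) 2).symm
  rw [this, ← MvPolynomial.C_mul]; norm_num

lemma Tmem (n : ℕ) : ∀ (L : List (Fin m)), L.length ≤ n → L ≠ [] →
    ((L.map z).prod).trace ∈ Spoly K m := by
  induction n with
  | zero =>
    intro L h hne
    exact absurd (List.length_eq_zero_iff.mp (Nat.le_zero.mp h)) hne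
  | succ n ih =>
    intro L hlen hne
    rcases L with _ | ⟨i, _ | ⟨j, _ | ⟨k, _ | ⟨d, L'⟩⟩⟩⟩
    · exact absurd rfl hne
    · simp only [List.map_cons, List.map_nil, List.prod_cons, List.prod_nil, mul_one]
      rw [genZ_trace]; exact (Spoly K m).zero_mem
    · simp only [List.map_cons, List.map_nil, List.prod_cons, List.prod_nil, mul_one]
      exact trace2mem K m i j
    · simp only [List.map_cons, List.map_nil, List.prod_cons, List.prod_nil, mul_one,
        ← mul_assoc]
      exact trace3mem K m i j k
    · set L0 : List (Fin m) := d :: L' with hL0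
      set M : Mat K 2 m := (L0.map z).prod with hM
      have hz : ∀ p : Fin m, (z p).trace = 0 := genZ_trace K m
      have hprod : (((i::j::k::L0).map z).prod) = z i * z j * z k * M := by
        simp [List.prod_cons, mul_assoc, ← hM]
      have hk4 := key4 (z i) (z j) (z k) M (hz i) (hz j) (hz k)
      have hLen : L0.length ≤ n := by
        simp only [List.length_cons] at hlen ⊢; omega
      have hL0ne : L0 ≠ [] := by simp [hL0]
      have hMmem : M.trace ∈ Spoly K m := ih L0 hLen hL0ne
      have htail : ∀ p : Fin m, (z p * M).trace ∈ Spoly K m := by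
        intro p
        have : z p * M = ((p::L0).map z).prod := by simp [List.prod_cons, ← hM]
        rw [this]
        refine ih (p::L0) ?_ (by simp)
        simp only [List.length_cons] at hlen ⊢; omega
      have decomp : (((i::j::k::L0).map z).prod).trace =
          (2:K)⁻¹ • (M.trace * (z i * z j * z k).trace
            + (z i * z j).trace * (z k * M).trace
            - (z i * z k).trace * (z j * M).trace
            + (z i * M).trace * (z j * z k).trace) := by
        rw [← hk4, hprod, MvPolynomial.smul_eq_C_mul, ← mul_assoc, half_two K m, one_mul]
      rw [decomp]
      refine Subalgebra.smul_mem _ ?_ _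
      refine add_mem (sub_mem (add_mem ?_ ?_) ?_) ?_
      · exact mul_mem hMmem (trace3mem K m i j k)
      · exact mul_mem (trace2mem K m i j) (htail k)
      · exact mul_mem (trace2mem K m i k) (htail j)
      · exact mul_mem (htail i) (trace2mem K m j k)



end Main
end Aux

/-- **Procesi.** For `k = 2`, `m ≥ 2`: `T_2m⁰ = W_2m`, i.e. every scalar
matrix `tr(z_{i_1} ⋯ z_{i_l})·I` belongs to `W_2m`; moreover `C_2m⁰` is generated as a
unital `K`-algebra by the `tr(z_i z_j)·I` (`i ≤ j`) and `tr(z_{i_1} z_{i_2} z_{i_3})·I`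
(`i_1 < i_2 < i_3`), all of which belong to `W_2m`. -/
theorem stmt10 (K : Type) [Field K] [CharZero K] (m : ℕ) (hm : 2 ≤ m) :
    Tkm0 K 2 m = Wkm K 2 m ∧
    (∀ (l : ℕ) (w : Fin (l + 1) → Fin m),
      scalarOf K 2 m (Matrix.trace ((List.ofFn fun j => genZ K 2 m (w j)).prod))
        ∈ Wkm K 2 m) ∧
    Ckm0 K 2 m = Algebra.adjoin K
      ({x | ∃ i j, i ≤ j ∧
          x = scalarOf K 2 m (Matrix.trace (genZ K 2 m i * genZ K 2 m j))} ∪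
       {x | ∃ i₁ i₂ i₃, i₁ < i₂ ∧ i₂ < i₃ ∧
          x = scalarOf K 2 m
            (Matrix.trace (genZ K 2 m i₁ * genZ K 2 m i₂ * genZ K 2 m i₃))}) ∧
    (({x | ∃ i j, i ≤ j ∧
          x = scalarOf K 2 m (Matrix.trace (genZ K 2 m i * genZ K 2 m j))} ∪
       {x | ∃ i₁ i₂ i₃, i₁ < i₂ ∧ i₂ < i₃ ∧
          x = scalarOf K 2 m
            (Matrix.trace (genZ K 2 m i₁ * genZ K 2 m i₂ * genZ K 2 m i₃))})
      ⊆ (Wkm K 2 m : Set (Mat K 2 m))) := by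
  classical
  set Gset : Set (Mat K 2 m) :=
    ({x | ∃ i j, i ≤ j ∧
        x = scalarOf K 2 m (Matrix.trace (genZ K 2 m i * genZ K 2 m j))} ∪
     {x | ∃ i₁ i₂ i₃, i₁ < i₂ ∧ i₂ < i₃ ∧
        x = scalarOf K 2 m
          (Matrix.trace (genZ K 2 m i₁ * genZ K 2 m i₂ * genZ K 2 m i₃))}) with hGset
  have hzW : ∀ i, genZ K 2 m i ∈ Wkm K 2 m := fun i => Algebra.subset_adjoin ⟨i, rfl⟩
  have hztr : ∀ i, (genZ K 2 m i).trace = 0 := genZ_trace K m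
  have e : ∀ f, scalarOf K 2 m f = f • (1 : Mat K 2 m) := fun f =>
    Algebra.algebraMap_eq_smul_one f
  -- the generators lie in W
  have hGsubW : Gset ⊆ (Wkm K 2 m : Set (Mat K 2 m)) := by
    rw [hGset]
    rintro x (⟨i, j, hij, rfl⟩ | ⟨a, b, c, h1, h2, rfl⟩)
    · rw [e, pairId _ _ (hztr i) (hztr j)]
      exact add_mem (mul_mem (hzW i) (hzW j)) (mul_mem (hzW j) (hzW i))
    · rw [e, tripleId _ _ _ (hztr a) (hztr b) (hztr c)]
      exact sub_mem (mul_mem (mul_mem (hzW a) (hzW b)) (hzW c))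
        (mul_mem (mul_mem (hzW c) (hzW b)) (hzW a))
  have hGW : Algebra.adjoin K Gset ≤ Wkm K 2 m := Algebra.adjoin_le hGsubW
  -- the scalar algebra hom
  let φ : MvPolynomial (Fin m × Fin 2 × Fin 2) K →ₐ[K] Mat K 2 m :=
    (Algebra.ofId _ _).restrictScalars K
  have himg : φ '' polyGens K m = Gset := by
    rw [hGset, polyGens, Set.image_union]
    congr 1
    · ext x
      constructor
      · rintro ⟨f, ⟨i, j, hij, rfl⟩, rfl⟩; exact ⟨i, j, hij, rfl⟩
      · rintro ⟨i, j, hij, rfl⟩; exact ⟨_, ⟨i, j, hij, rfl⟩, rfl⟩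
    · ext x
      constructor
      · rintro ⟨f, ⟨a, b, c, h1, h2, rfl⟩, rfl⟩; exact ⟨a, b, c, h1, h2, rfl⟩
      · rintro ⟨a, b, c, h1, h2, rfl⟩; exact ⟨_, ⟨a, b, c, h1, h2, rfl⟩, rfl⟩
  have hmap : (Spoly K m).map φ = Algebra.adjoin K Gset := by
    rw [Spoly, AlgHom.map_adjoin, himg]
  -- every word trace scalar lies in adjoin Gset
  have claim2A : ∀ (l : ℕ) (w : Fin (l + 1) → Fin m),
      scalarOf K 2 m (Matrix.trace ((List.ofFn fun j => genZ K 2 m (w j)).prod))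
        ∈ Algebra.adjoin K Gset := by
    intro l w
    have hofn : (List.ofFn fun j => genZ K 2 m (w j))
        = (List.ofFn w).map (genZ K 2 m) := by rw [List.map_ofFn]; rfl
    rw [hofn]
    have hmem : (((List.ofFn w).map (genZ K 2 m)).prod).trace ∈ Spoly K m :=
      Tmem K m (l + 1) (List.ofFn w) (by simp) (by simp [← List.length_pos_iff])
    have : φ ((((List.ofFn w).map (genZ K 2 m)).prod).trace) ∈ (Spoly K m).map φ :=
      Subalgebra.mem_map.mpr ⟨_, hmem, rfl⟩
    rw [hmap] at this
    exact this
  have claim2 : ∀ (l : ℕ) (w : Fin (l + 1) → Fin m),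
      scalarOf K 2 m (Matrix.trace ((List.ofFn fun j => genZ K 2 m (w j)).prod))
        ∈ Wkm K 2 m := fun l w => hGW (claim2A l w)
  have hCle : Ckm0 K 2 m ≤ Algebra.adjoin K Gset := by
    rw [Ckm0]
    apply Algebra.adjoin_le
    rintro x ⟨l, w, rfl⟩
    exact claim2A l w
  have hCge : Algebra.adjoin K Gset ≤ Ckm0 K 2 m := by
    apply Algebra.adjoin_le
    rw [hGset]
    rintro x (⟨i, j, hij, rfl⟩ | ⟨a, b, c, h1, h2, rfl⟩)
    · apply Algebra.subset_adjoin
      refine ⟨1, ![i, j], ?_⟩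
      have : (List.ofFn fun j' => genZ K 2 m (![i, j] j')).prod
          = genZ K 2 m i * genZ K 2 m j := by
        simp [List.ofFn_succ]
      rw [this]
    · apply Algebra.subset_adjoin
      refine ⟨2, ![a, b, c], ?_⟩
      have : (List.ofFn fun j' => genZ K 2 m (![a, b, c] j')).prod
          = genZ K 2 m a * genZ K 2 m b * genZ K 2 m c := by
        simp [List.ofFn_succ, mul_assoc]
      rw [this]
  have hCeq : Ckm0 K 2 m = Algebra.adjoin K Gset := le_antisymm hCle hCge
  have hC0W : Ckm0 K 2 m ≤ Wkm K 2 m := le_trans hCle hGW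
  have hT : Tkm0 K 2 m = Wkm K 2 m := by
    rw [Tkm0]; exact sup_eq_left.mpr hC0W
  exact ⟨hT, claim2, hCeq, hGsubW⟩
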